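/- (Rogers–Zong inequality) For convex bodies K, L in ℝⁿ, the translative covering number satisfies C(K, L) ≤ (vol(K - L)/vol(L)) · θ(L), where θ(L) is the translative covering density of ℝⁿ by L. -/

import Mathlib

open MeasureTheory Pointwise Filter ENNReal

/-- The minimal number of translates of `B` needed to cover `A` (`⊤` if no finite
cover by translates exists). -/
noncomputable def covNumber {n : ℕ} (A B : Set (EuclideanSpace ℝ (Fin n))) : ℕ∞ :=
  sInf {N : ℕ∞ | ∃ t : Finset (EuclideanSpace ℝ (Fin n)),
    (t.card : ℕ∞) = N ∧ A ⊆ ⋃ x ∈ t, x +ᵥ B}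

/-- The infimal density of coverings of the cube `[-R, R]ⁿ` by translates of `L`:
`inf { vol(L)·#Λ/(2R)ⁿ : [-R,R]ⁿ ⊆ ⋃_{λ ∈ Λ} (x_λ + L) }`. -/
noncomputable def covDensityApprox {n : ℕ} (L : Set (EuclideanSpace ℝ (Fin n))) (R : ℝ) : ℝ :=
  sInf {d : ℝ | ∃ (m : ℕ) (x : Fin m → EuclideanSpace ℝ (Fin n)),
    {y : EuclideanSpace ℝ (Fin n) | ∀ i, |y i| ≤ R} ⊆ (⋃ i, x i +ᵥ L) ∧
      d = (volume L).toReal * m / (2 * R) ^ n}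

section RZaux

variable {n : ℕ}

lemma rz_abs_coord_le (y : EuclideanSpace ℝ (Fin n)) (i : Fin n) : |y i| ≤ ‖y‖ := by
  rw [EuclideanSpace.norm_eq, ← Real.sqrt_sq_eq_abs]
  apply Real.sqrt_le_sqrt
  calc (y i)^2 = ‖y i‖^2 := by rw [Real.norm_eq_abs, sq_abs]
  _ ≤ ∑ j, ‖y j‖^2 := Finset.single_le_sum (f := fun j => ‖y j‖^2)
      (fun j _ => sq_nonneg _) (Finset.mem_univ i)

lemma rz_cube_compact (R : ℝ) : IsCompact {y : EuclideanSpace ℝ (Fin n) | ∀ i, |y i| ≤ R} := by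
  have h : {y : EuclideanSpace ℝ (Fin n) | ∀ i, |y i| ≤ R} =
      (EuclideanSpace.equiv (Fin n) ℝ) ⁻¹' (Set.univ.pi fun _ => Set.Icc (-R) R) := by
    ext y
    simp only [Set.mem_preimage, Set.mem_univ_pi, Set.mem_Icc, Set.mem_setOf_eq, abs_le]
    rfl
  rw [h]
  exact (EuclideanSpace.equiv (Fin n) ℝ).toHomeomorph.isCompact_preimage.mpr
    (isCompact_univ_pi fun _ => isCompact_Icc)

lemma rz_cube_volume (r : ℝ) (hr : 0 ≤ r) :
    volume {y : EuclideanSpace ℝ (Fin n) | ∀ i, |y i| ≤ r} = ENNReal.ofReal ((2*r)^n) := by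
  have h : {y : EuclideanSpace ℝ (Fin n) | ∀ i, |y i| ≤ r} =
      (MeasurableEquiv.toLp 2 (Fin n → ℝ)).symm ⁻¹' (Set.univ.pi fun _ => Set.Icc (-r) r) := by
    ext y
    simp only [Set.mem_preimage, Set.mem_univ_pi, Set.mem_Icc, Set.mem_setOf_eq, abs_le]
    rfl
  rw [h, MeasurePreserving.measure_preimage
    (EuclideanSpace.volume_preserving_symm_measurableEquiv_toLp (Fin n))
    (MeasurableSet.univ_pi (fun _ => measurableSet_Icc)).nullMeasurableSet]
  rw [volume_pi_pi]
  simp only [Real.volume_Icc, Finset.prod_const, Finset.card_univ, Fintype.card_fin]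
  rw [← ENNReal.ofReal_pow (by linarith)]
  congr 1; ring

lemma rz_vol_preimage (c : EuclideanSpace ℝ (Fin n)) (D : Set (EuclideanSpace ℝ (Fin n))) :
    volume ((fun t => c - t) ⁻¹' D) = volume D := by
  have h : (fun t : EuclideanSpace ℝ (Fin n) => c - t) = (fun s => c + s) ∘ Neg.neg := by
    ext t; simp [sub_eq_add_neg]
  rw [h, Set.preimage_comp, volume.measure_preimage_neg, measure_preimage_add]

lemma rz_mem_vadd (x t : EuclideanSpace ℝ (Fin n)) (D : Set (EuclideanSpace ℝ (Fin n))) :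
    x ∈ t +ᵥ D ↔ x - t ∈ D := by
  rw [Set.mem_vadd_set_iff_neg_vadd_mem]
  simp [sub_eq_neg_add]

lemma rz_exists_cover (L : Set (EuclideanSpace ℝ (Fin n))) (hLint : (interior L).Nonempty)
    (R : ℝ) (hR : 0 < R) {ε : ℝ} (hε : 0 < ε) :
    ∃ (m : ℕ) (x : Fin m → EuclideanSpace ℝ (Fin n)),
      {y : EuclideanSpace ℝ (Fin n) | ∀ i, |y i| ≤ R} ⊆ (⋃ i, x i +ᵥ L) ∧
      (volume L).toReal * m / (2 * R) ^ n < covDensityApprox L R + ε := by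
  classical
  set S := {d : ℝ | ∃ (m : ℕ) (x : Fin m → EuclideanSpace ℝ (Fin n)),
    {y : EuclideanSpace ℝ (Fin n) | ∀ i, |y i| ≤ R} ⊆ (⋃ i, x i +ᵥ L) ∧
      d = (volume L).toReal * m / (2 * R) ^ n} with hS
  obtain ⟨a, ha⟩ := hLint
  -- S is nonempty
  have hne : S.Nonempty := by
    have hcover : {y : EuclideanSpace ℝ (Fin n) | ∀ i, |y i| ≤ R} ⊆
        ⋃ v : EuclideanSpace ℝ (Fin n), v +ᵥ interior L := by
      intro y _
      refine Set.mem_iUnion.mpr ⟨y - a, ?_⟩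
      rw [rz_mem_vadd]
      simpa using ha
    obtain ⟨s, hs⟩ := (rz_cube_compact R).elim_finite_subcover _
      (fun v => isOpen_interior.vadd v) hcover
    refine ⟨(volume L).toReal * s.card / (2 * R) ^ n,
      s.card, fun i => (s.equivFin.symm i : EuclideanSpace ℝ (Fin n)), ?_, rfl⟩
    intro y hy
    obtain ⟨v, hv, hyv⟩ := Set.mem_iUnion₂.mp (hs hy)
    refine Set.mem_iUnion.mpr ⟨s.equivFin ⟨v, hv⟩, ?_⟩
    show y ∈ ((s.equivFin.symm (s.equivFin ⟨v, hv⟩)) : EuclideanSpace ℝ (Fin n)) +ᵥ L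
    simp only [Equiv.symm_apply_apply]
    exact Set.vadd_set_mono interior_subset hyv
  have hbdd : BddBelow S := by
    refine ⟨0, fun d hd => ?_⟩
    obtain ⟨m, x, -, rfl⟩ := hd
    have : (0:ℝ) < (2*R)^n := by positivity
    positivity
  have hlt : sInf S < covDensityApprox L R + ε := by
    have : covDensityApprox L R = sInf S := rfl
    rw [← this] at *
    linarith
  obtain ⟨d, hdS, hdlt⟩ := (csInf_lt_iff hbdd hne).mp hlt
  obtain ⟨m, x, hcov, rfl⟩ := hdS
  exact ⟨m, x, hcov, hdlt⟩

end RZaux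

/-- Rogers–Zong: `C(K, L) ≤ (vol(K - L)/vol(L)) · θ(L)`, where `θ(L)` is the
translative covering density of `ℝⁿ` by `L`, defined as the limit as `R → ∞` of the
infimal density of coverings of `[-R,R]ⁿ` by translates of `L`. -/
theorem rogers_zong {n : ℕ} (hn : 1 ≤ n) (K L : Set (EuclideanSpace ℝ (Fin n)))
    (hKc : IsCompact K) (hKconv : Convex ℝ K) (hKint : (interior K).Nonempty)
    (hLc : IsCompact L) (hLconv : Convex ℝ L) (hLint : (interior L).Nonempty)
    (θL : ℝ) (hθ : Tendsto (covDensityApprox L) atTop (nhds θL)) :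
    (covNumber K L : ℝ≥0∞) ≤
      ENNReal.ofReal ((volume (K - L)).toReal / (volume L).toReal * θL) := by
  classical
  set D := K - L with hD
  have hDc : IsCompact D := by
    rw [hD, sub_eq_add_neg]
    exact hKc.add hLc.neg
  have hLpos : 0 < volume L := by
    obtain ⟨a, ha⟩ := hLint
    calc (0:ℝ≥0∞) < volume (interior L) := isOpen_interior.measure_pos volume ⟨a, ha⟩
    _ ≤ volume L := measure_mono interior_subset
  have hLfin : volume L ≠ ⊤ := hLc.measure_lt_top.ne
  set vL := (volume L).toReal with hvLdef
  have hvL : 0 < vL := ENNReal.toReal_pos hLpos.ne' hLfin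
  set vD := (volume D).toReal with hvDdef
  have hvD : 0 ≤ vD := ENNReal.toReal_nonneg
  have hDfin : volume D ≠ ⊤ := hDc.measure_lt_top.ne
  obtain ⟨r, hr⟩ := hKc.isBounded.subset_closedBall 0
  set ρ := max r 1 with hρdef
  have hρ1 : (1:ℝ) ≤ ρ := le_max_right _ _
  have hρK : ∀ k ∈ K, ∀ i, |k i| ≤ ρ := by
    intro k hk i
    refine (rz_abs_coord_le k i).trans ?_
    have := mem_closedBall_zero_iff.mp (hr hk)
    exact this.trans (le_max_left _ _)
  set F : ℝ → ℝ := fun R => vD / vL * (covDensityApprox L R + 1/R) * (R/(R-ρ))^n with hFdef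
  have key : ∀ᶠ R in atTop, (covNumber K L : ℝ≥0∞) ≤ ENNReal.ofReal (F R) := by
    filter_upwards [eventually_ge_atTop (ρ+1)] with R hR
    have hRpos : (0:ℝ) < R := by linarith
    have hRρ : (1:ℝ) ≤ R - ρ := by linarith
    obtain ⟨m, x, hcov, hdens⟩ :=
      rz_exists_cover L hLint R hRpos (ε := 1/R) (by positivity)
    set c := covDensityApprox L R + 1/R with hcdef
    -- the family of "good translation" sets
    set A : Fin m → Set (EuclideanSpace ℝ (Fin n)) :=
      fun i => (fun t => x i - t) ⁻¹' D with hAdef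
    have hAmeas : ∀ i, MeasurableSet (A i) :=
      fun i => hDc.isClosed.measurableSet.preimage (measurable_const.sub measurable_id)
    set Q := {t : EuclideanSpace ℝ (Fin n) | ∀ i, |t i| ≤ R - ρ} with hQdef
    have hQvol : volume Q = ENNReal.ofReal ((2*(R-ρ))^n) := rz_cube_volume _ (by linarith)
    have hQpos : volume Q ≠ 0 := by
      rw [hQvol]
      simp only [ne_eq, ENNReal.ofReal_eq_zero, not_le]
      positivity
    have hQfin : volume Q ≠ ⊤ := by rw [hQvol]; exact ENNReal.ofReal_ne_top
    set f : EuclideanSpace ℝ (Fin n) → ℝ≥0∞ :=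
      fun t => ∑ i, (A i).indicator (1 : EuclideanSpace ℝ (Fin n) → ℝ≥0∞) t with hfdef
    have hfmeas : Measurable f :=
      Finset.measurable_sum _ (fun i _ => (measurable_one.indicator (hAmeas i)))
    have hfcount : ∀ t, f t =
        ((Finset.univ.filter (fun i => x i ∈ t +ᵥ D)).card : ℝ≥0∞) := by
      intro t
      rw [Finset.card_filter]
      push_cast
      refine Finset.sum_congr rfl (fun i _ => ?_)
      rw [Set.indicator_apply]
      have : t ∈ A i ↔ x i ∈ t +ᵥ D := by
        rw [hAdef, Set.mem_preimage, rz_mem_vadd]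
      simp [this]
    have hint : ∫⁻ t in Q, f t ≤ (m : ℝ≥0∞) * volume D := by
      simp only [hfdef]
      rw [lintegral_finset_sum (f := fun i => (A i).indicator (1 : EuclideanSpace ℝ (Fin n) → ℝ≥0∞)) _
        (fun i _ => (measurable_one.indicator (hAmeas i)))]
      have heach : ∀ i : Fin m, ∫⁻ t in Q, (A i).indicator (1 : EuclideanSpace ℝ (Fin n) → ℝ≥0∞) t ≤ volume D := by
        intro i
        rw [lintegral_indicator_one (hAmeas i), Measure.restrict_apply (hAmeas i)]
        calc volume (A i ∩ Q) ≤ volume (A i) := measure_mono Set.inter_subset_left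
        _ = volume D := rz_vol_preimage _ _
      calc ∑ i, ∫⁻ t in Q, (A i).indicator (1 : EuclideanSpace ℝ (Fin n) → ℝ≥0∞) t ≤ ∑ _i : Fin m, volume D :=
            Finset.sum_le_sum (fun i _ => heach i)
      _ = (m : ℝ≥0∞) * volume D := by simp [Finset.sum_const, nsmul_eq_mul]
    set B : ℝ≥0∞ := (m : ℝ≥0∞) * volume D / volume Q with hBdef
    have hBfin : B ≠ ⊤ :=
      (ENNReal.div_lt_top (by finiteness) hQpos).ne
    -- pigeonhole: some t in Q has f t ≤ B
    have hex : ∃ t ∈ Q, f t ≤ B := by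
      by_contra hcon
      push_neg at hcon
      set N := ⌊B.toReal⌋₊ with hNdef
      have hBN : B < ((N+1 : ℕ) : ℝ≥0∞) := by
        rw [← ENNReal.ofReal_toReal hBfin]
        rw [ENNReal.ofReal_lt_iff_lt_toReal ENNReal.toReal_nonneg (by simp)]
        push_cast
        rw [ENNReal.toReal_add (by simp) (by simp)]
        simpa using Nat.lt_floor_add_one B.toReal
      have hlow : ∀ t ∈ Q, ((N+1 : ℕ) : ℝ≥0∞) ≤ f t := by
        intro t ht
        have hBt := hcon t ht
        rw [hfcount] at hBt ⊢
        have h1 : B.toReal < ((Finset.univ.filter (fun i => x i ∈ t +ᵥ D)).card : ℝ) := by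
          have := (ENNReal.toReal_lt_toReal hBfin (by simp)).mpr hBt
          simpa using this
        have h2 : N < (Finset.univ.filter (fun i => x i ∈ t +ᵥ D)).card := by
          have := (Nat.floor_le ENNReal.toReal_nonneg : (N:ℝ) ≤ B.toReal)
          exact_mod_cast lt_of_le_of_lt this h1
        exact_mod_cast h2
      have hge : ((N+1 : ℕ) : ℝ≥0∞) * volume Q ≤ ∫⁻ t in Q, f t := by
        calc ((N+1 : ℕ) : ℝ≥0∞) * volume Q = ∫⁻ _t in Q, ((N+1 : ℕ) : ℝ≥0∞) := by
              rw [setLIntegral_const]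
        _ ≤ ∫⁻ t in Q, f t := setLIntegral_mono hfmeas hlow
      have hlt : (m : ℝ≥0∞) * volume D < ((N+1 : ℕ) : ℝ≥0∞) * volume Q := by
        have := (ENNReal.div_lt_iff (Or.inl hQpos) (Or.inl hQfin)).mp hBN
        exact this
      exact absurd (hge.trans hint) (not_le.mpr hlt)
    obtain ⟨t, htQ, htle⟩ := hex
    set s := Finset.univ.filter (fun i => x i ∈ t +ᵥ D) with hsdef
    have hcovK : K ⊆ ⋃ v ∈ s.image (fun i => x i - t), v +ᵥ L := by
      intro k hk
      have hcube : t + k ∈ {y : EuclideanSpace ℝ (Fin n) | ∀ i, |y i| ≤ R} := by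
        intro i
        have h1 := hρK k hk i
        have h2 := htQ i
        have h3 : (t + k) i = t i + k i := rfl
        rw [h3]
        calc |t i + k i| ≤ |t i| + |k i| := abs_add_le _ _
        _ ≤ (R - ρ) + ρ := add_le_add h2 h1
        _ = R := by ring
      obtain ⟨i, hmem⟩ := Set.mem_iUnion.mp (hcov hcube)
      have hl : t + k - x i ∈ L := by rwa [rz_mem_vadd] at hmem
      have hxi : x i ∈ t +ᵥ D := by
        rw [rz_mem_vadd, hD]
        have h4 : x i - t = k - (t + k - x i) := by abel
        rw [h4]
        exact Set.sub_mem_sub hk hl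
      have hi : i ∈ s := Finset.mem_filter.mpr ⟨Finset.mem_univ _, hxi⟩
      refine Set.mem_iUnion₂.mpr ⟨x i - t, Finset.mem_image_of_mem _ hi, ?_⟩
      rw [rz_mem_vadd]
      have h5 : k - (x i - t) = t + k - x i := by abel
      rw [h5]; exact hl
    have h1 : covNumber K L ≤ ((s.image (fun i => x i - t)).card : ℕ∞) := by
      unfold covNumber
      exact sInf_le ⟨_, rfl, hcovK⟩
    have h2 : (covNumber K L : ℝ≥0∞) ≤ ((s.image (fun i => x i - t)).card : ℝ≥0∞) := by
      have := ENat.toENNReal_le.mpr h1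
      simpa using this
    have h3 : ((s.image (fun i => x i - t)).card : ℝ≥0∞) ≤ (s.card : ℝ≥0∞) :=
      Nat.cast_le.mpr Finset.card_image_le
    rw [hfcount t] at htle
    have hBval : B = ENNReal.ofReal ((m : ℝ) * vD / (2*(R-ρ))^n) := by
      have hnum : (m : ℝ≥0∞) * volume D = ENNReal.ofReal ((m:ℝ) * vD) := by
        rw [ENNReal.ofReal_mul (by positivity), ENNReal.ofReal_natCast, hvDdef,
          ENNReal.ofReal_toReal hDfin]
      rw [hBdef, hnum, hQvol, ← ENNReal.ofReal_div_of_pos (by positivity)]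
    have hreal : (m : ℝ) * vD / (2*(R-ρ))^n ≤ F R := by
      have h2R : (0:ℝ) < (2*R)^n := by positivity
      rw [← hvLdef] at hdens
      have hm : (m:ℝ) ≤ c * (2*R)^n / vL := by
        rw [le_div_iff₀ hvL]
        rw [div_lt_iff₀ h2R] at hdens
        linarith
      have hQr : (0:ℝ) < (2*(R-ρ))^n := by positivity
      have hRρ0 : R - ρ ≠ 0 := by linarith
      have hFeq : F R = (c * (2*R)^n / vL) * vD / (2*(R-ρ))^n := by
        simp only [hFdef, ← hcdef, div_pow, mul_pow]
        field_simp
      rw [hFeq]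
      gcongr
    calc (covNumber K L : ℝ≥0∞) ≤ (s.card : ℝ≥0∞) := h2.trans h3
    _ ≤ B := htle
    _ = ENNReal.ofReal ((m : ℝ) * vD / (2*(R-ρ))^n) := hBval
    _ ≤ ENNReal.ofReal (F R) := ENNReal.ofReal_le_ofReal hreal
  have hratio : Tendsto (fun R : ℝ => R / (R - ρ)) atTop (nhds 1) := by
    have hev : ∀ᶠ R : ℝ in atTop, R / (R - ρ) = 1 + ρ / (R - ρ) := by
      filter_upwards [eventually_gt_atTop ρ] with R hR
      have hne : R - ρ ≠ 0 := by linarith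
      field_simp
      ring
    rw [tendsto_congr' hev]
    have h2 : Tendsto (fun R : ℝ => ρ / (R - ρ)) atTop (nhds 0) :=
      Tendsto.div_atTop tendsto_const_nhds (tendsto_atTop_add_const_right _ _ tendsto_id)
    simpa using tendsto_const_nhds.add h2
  have hFlim : Tendsto F atTop (nhds (vD / vL * θL)) := by
    have h1 : Tendsto (fun R : ℝ => covDensityApprox L R + 1/R) atTop (nhds θL) := by
      have := hθ.add tendsto_inv_atTop_zero
      simpa [one_div] using this
    have h2 : Tendsto (fun R : ℝ => (R/(R-ρ))^n) atTop (nhds 1) := by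
      simpa using hratio.pow n
    have h3 := (h1.const_mul (vD / vL)).mul h2
    simpa [hFdef, mul_one] using h3
  exact ge_of_tendsto ((ENNReal.continuous_ofReal.tendsto _).comp hFlim) key
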